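/- For every pair of coprime integers p, q with 0 < p < q, there exists a function w : ℤ/qℤ → {0, 1} taking the value 1 at exactly p residues such that the q-periodic bi-infinite sequence (w(i mod q))_{i ∈ ℤ} is Sturmian; moreover w is unique up to cyclic permutation, i.e., any two such functions differ by precomposition with a translation of ℤ/qℤ. -/

import Mathlib

open Finset

/-- A bi-infinite sequence `s : ℤ → ℕ` with values in `{0,1}` is Sturmian
(balanced) if the numbers of `1`'s in any two blocks of the same length differ
by at most one. -/
def IsSturmianBiSeq (s : ℤ → ℕ) : Prop :=
  (∀ i, s i = 0 ∨ s i = 1) ∧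
  ∀ (n : ℕ) (i j : ℤ),
    |(∑ k ∈ Finset.range n, (s (i + k) : ℤ)) - ∑ k ∈ Finset.range n, (s (j + k) : ℤ)| ≤ 1

/-- `w : ZMod q → ℕ` is a Sturmian word with exactly `p` ones: it takes values in
`{0,1}`, the value `1` is taken at exactly `p` residues, and the `q`-periodic
bi-infinite sequence `i ↦ w (i mod q)` is Sturmian. -/
def IsSturmianWord (p q : ℕ) (w : ZMod q → ℕ) : Prop :=
  (∀ i, w i = 0 ∨ w i = 1) ∧
  ((Finset.range q).filter (fun i : ℕ => w (i : ZMod q) = 1)).card = p ∧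
  IsSturmianBiSeq (fun i : ℤ => w (i : ZMod q))



/-- Mechanical sequence. -/
def mechInt (p q : ℕ) (i : ℤ) : ℤ := (p * (i + 1)) / q - (p * i) / q

lemma mechInt_nonneg {p q : ℕ} (hq : 0 < q) (i : ℤ) : 0 ≤ mechInt p q i := by
  have : (p : ℤ) * i / q ≤ p * (i + 1) / q :=
    Int.ediv_le_ediv (by exact_mod_cast hq) (by nlinarith [Int.natCast_nonneg p])
  simpa [mechInt] using this

lemma mechInt_le_one {p q : ℕ} (hpq : p < q) (i : ℤ) : mechInt p q i ≤ 1 := by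
  have h1 : (p : ℤ) * (i + 1) ≤ p * i + 1 * q := by push_cast; nlinarith [hpq]
  have h2 : (p : ℤ) * (i + 1) / q ≤ (p * i + 1 * q) / q :=
    Int.ediv_le_ediv (by exact_mod_cast Nat.pos_of_ne_zero (by omega)) h1
  have h3 : ((p : ℤ) * i + 1 * q) / q = p * i / q + 1 := by
    rw [Int.add_mul_ediv_right _ _ (by exact_mod_cast (Nat.pos_of_ne_zero (by omega)).ne')]
  simp only [mechInt]
  omega

lemma mechInt_periodic {p q : ℕ} (hq : 0 < q) (i : ℤ) :
    mechInt p q (i % q) = mechInt p q i := by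
  have hq' : (q : ℤ) ≠ 0 := by exact_mod_cast hq.ne'
  have e : (i % q : ℤ) = i + (-(i / q)) * q := by rw [Int.emod_def]; ring
  simp only [mechInt, e]
  have e1 : (p : ℤ) * (i + -(i / q) * q + 1) = p * (i + 1) + (-(p * (i / q))) * q := by ring
  have e2 : (p : ℤ) * (i + -(i / q) * q) = p * i + (-(p * (i / q))) * q := by ring
  rw [e1, e2, Int.add_mul_ediv_right _ _ hq', Int.add_mul_ediv_right _ _ hq']
  ring

lemma mechInt_telescope (p q : ℕ) (i : ℤ) (n : ℕ) :
    ∑ k ∈ Finset.range n, mechInt p q (i + k) = (p * (i + n)) / q - (p * i) / q := by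
  induction n with
  | zero => simp
  | succ n ih =>
      rw [Finset.sum_range_succ, ih]
      simp only [mechInt]
      push_cast
      ring_nf

lemma mechInt_window_bound {p q : ℕ} (hq : 0 < q) (i : ℤ) (n : ℕ) :
    |(q : ℤ) * (∑ k ∈ Finset.range n, mechInt p q (i + k)) - p * n| ≤ q - 1 := by
  have hq' : (0 : ℤ) < q := by exact_mod_cast hq
  rw [mechInt_telescope]
  have h1 : (q : ℤ) * ((p * (i + n)) / q) = p * (i + n) - (p * (i + n)) % q := by
    rw [Int.emod_def]; ring
  have h2 : (q : ℤ) * ((p * i) / q) = p * i - (p * i) % q := by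
    rw [Int.emod_def]; ring
  have h3 : 0 ≤ (p : ℤ) * (i + n) % q := Int.emod_nonneg _ hq'.ne'
  have h4 : (p : ℤ) * (i + n) % q < q := Int.emod_lt_of_pos _ hq'
  have h5 : 0 ≤ (p : ℤ) * i % q := Int.emod_nonneg _ hq'.ne'
  have h6 : (p : ℤ) * i % q < q := Int.emod_lt_of_pos _ hq'
  rw [mul_sub, h1, h2, abs_le]
  constructor <;> nlinarith

/-- The mechanical word. -/
def mechWord (p q : ℕ) (x : ZMod q) : ℕ := (mechInt p q (ZMod.val x : ℤ)).toNat

lemma mechWord_cast {p q : ℕ} (hq : 0 < q) (i : ℤ) :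
    (mechWord p q (i : ZMod q) : ℤ) = mechInt p q i := by
  haveI : NeZero q := ⟨hq.ne'⟩
  have hval : ((ZMod.val ((i : ZMod q))) : ℤ) = i % q := ZMod.val_intCast i
  rw [mechWord, hval, mechInt_periodic hq, Int.toNat_of_nonneg (mechInt_nonneg hq i)]

lemma mechWord_cast_nat {p q : ℕ} (hq : 0 < q) (n : ℕ) :
    (mechWord p q (n : ZMod q) : ℤ) = mechInt p q n := by
  have : ((n : ℕ) : ZMod q) = ((n : ℤ) : ZMod q) := by push_cast; rfl
  rw [this, mechWord_cast hq]

lemma mechWord_zero_one {p q : ℕ} (hpq : p < q) (x : ZMod q) :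
    mechWord p q x = 0 ∨ mechWord p q x = 1 := by
  have h1 := mechInt_nonneg (p := p) (q := q) (by omega) (ZMod.val x : ℤ)
  have h2 := mechInt_le_one (p := p) (q := q) hpq (ZMod.val x : ℤ)
  unfold mechWord; omega

lemma mechWord_sturmian (p q : ℕ) (hp : 0 < p) (hpq : p < q) :
    IsSturmianWord p q (mechWord p q) := by
  have hq : 0 < q := by omega
  have hq' : (0 : ℤ) < q := by exact_mod_cast hq
  refine ⟨mechWord_zero_one hpq, ?_, fun i => mechWord_zero_one hpq _, ?_⟩
  · -- count of ones
    have hsum : ∑ i ∈ Finset.range q, (mechWord p q (i : ZMod q) : ℤ) = p := by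
      have : ∑ i ∈ Finset.range q, (mechWord p q (i : ZMod q) : ℤ)
          = ∑ i ∈ Finset.range q, mechInt p q ((0 : ℤ) + i) := by
        refine Finset.sum_congr rfl fun i _ => ?_
        rw [show ((0 : ℤ) + i) = (i : ℤ) by ring, mechWord_cast_nat hq]
      rw [this, mechInt_telescope]
      simp [Int.mul_ediv_cancel _ hq'.ne']
    have hcard : ((Finset.range q).filter
        (fun i : ℕ => mechWord p q (i : ZMod q) = 1)).card
        = ∑ i ∈ Finset.range q, mechWord p q (i : ZMod q) := by
      rw [Finset.card_filter]
      refine Finset.sum_congr rfl fun i _ => ?_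
      rcases mechWord_zero_one (p := p) hpq (i : ZMod q) with h | h <;> simp [h]
    have : ((∑ i ∈ Finset.range q, mechWord p q (i : ZMod q) : ℕ) : ℤ) = p := by
      push_cast
      exact hsum
    omega
  · -- balanced
    intro n i j
    have ei : ∀ k : ℕ, ((mechWord p q ((i + k : ℤ) : ZMod q)) : ℤ) = mechInt p q (i + k) :=
      fun k => mechWord_cast hq _
    have ej : ∀ k : ℕ, ((mechWord p q ((j + k : ℤ) : ZMod q)) : ℤ) = mechInt p q (j + k) :=
      fun k => mechWord_cast hq _
    simp only [ei, ej]
    have bi := mechInt_window_bound (p := p) hq i n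
    have bj := mechInt_window_bound (p := p) hq j n
    set Ti := ∑ k ∈ Finset.range n, mechInt p q (i + k)
    set Tj := ∑ k ∈ Finset.range n, mechInt p q (j + k)
    rw [abs_le] at bi bj ⊢
    constructor <;> nlinarith [bi.1, bi.2, bj.1, bj.2]

section Uniq

variable {p q : ℕ}

/-- Casting an integer shifted by `q` gives the same value. -/
lemma zmod_cast_mod (hq : 0 < q) (i : ℤ) : ((i % q : ℤ) : ZMod q) = (i : ZMod q) := by
  rw [ZMod.intCast_eq_intCast_iff']
  simp [Int.emod_emod_of_dvd]

/-- Sum of any `q` consecutive values equals `p`. -/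
lemma period_sum (hq : 0 < q) (w : ZMod q → ℕ)
    (h01 : ∀ i, w i = 0 ∨ w i = 1)
    (hcard : ((Finset.range q).filter (fun i : ℕ => w (i : ZMod q) = 1)).card = p)
    (a : ℤ) :
    ∑ j ∈ Finset.range q, (w ((a + j : ℤ) : ZMod q) : ℤ) = p := by
  -- first the base case a = 0
  have base : ∑ j ∈ Finset.range q, (w ((j : ℤ) : ZMod q) : ℤ) = p := by
    have hcard' : ((Finset.range q).filter (fun i : ℕ => w (i : ZMod q) = 1)).card
        = ∑ i ∈ Finset.range q, w (i : ZMod q) := by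
      rw [Finset.card_filter]
      refine Finset.sum_congr rfl fun i _ => ?_
      rcases h01 ((i : ZMod q)) with h | h <;> simp [h]
    have : ((∑ i ∈ Finset.range q, w (i : ZMod q) : ℕ) : ℤ) = p := by
      rw [← hcard', hcard]
    rw [← this]
    push_cast
    refine Finset.sum_congr rfl fun i _ => ?_
    norm_cast
  -- the sum is invariant under shifting a by 1
  have shift : ∀ a : ℤ,
      ∑ j ∈ Finset.range q, (w ((a + 1 + j : ℤ) : ZMod q) : ℤ)
        = ∑ j ∈ Finset.range q, (w ((a + j : ℤ) : ZMod q) : ℤ) := by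
    intro a
    have e1 : ∑ j ∈ Finset.range q, (w ((a + 1 + j : ℤ) : ZMod q) : ℤ)
        = ∑ j ∈ Finset.range q, (fun j : ℕ => (w ((a + j : ℤ) : ZMod q) : ℤ)) (j + 1) := by
      refine Finset.sum_congr rfl fun j _ => ?_
      push_cast
      ring_nf
    have e2 := Finset.sum_range_succ' (fun j : ℕ => (w ((a + j : ℤ) : ZMod q) : ℤ)) q
    have e3 := Finset.sum_range_succ (fun j : ℕ => (w ((a + j : ℤ) : ZMod q) : ℤ)) q
    have e4 : (w ((a + (q : ℕ) : ℤ) : ZMod q) : ℤ) = (w ((a + (0 : ℕ) : ℤ) : ZMod q) : ℤ) := by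
      have : ((a + (q : ℕ) : ℤ) : ZMod q) = ((a + (0 : ℕ) : ℤ) : ZMod q) := by
        push_cast
        simp
      rw [this]
    simp only [e1]
    linarith
  have conv : ∀ a b : ℤ, a = b →
      ∑ j ∈ Finset.range q, (w ((a + j : ℤ) : ZMod q) : ℤ)
        = ∑ j ∈ Finset.range q, (w ((b + j : ℤ) : ZMod q) : ℤ) := fun a b h => by rw [h]
  induction a using Int.induction_on with
  | zero => simpa using base
  | succ n ih => rw [shift (n : ℤ)]; exact ih
  | pred n ih =>
      rw [← shift ((-(n : ℤ) - 1)),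
        conv ((-(n : ℤ) - 1) + 1) (-(n : ℤ)) (by ring)]
      exact ih

end Uniq

/-- Window sums of a balanced periodic word are within `q-1` of `p*n/q`. -/
lemma window_bound (hq : 0 < q) (w : ZMod q → ℕ) (hw : IsSturmianWord p q w)
    (n : ℕ) (i : ℤ) :
    |(q : ℤ) * (∑ k ∈ Finset.range n, (w ((i + k : ℤ) : ZMod q) : ℤ)) - p * n| ≤ q - 1 := by
  have hq' : (0 : ℤ) < q := by exact_mod_cast hq
  set T : ℤ → ℤ := fun j => ∑ k ∈ Finset.range n, (w ((j + k : ℤ) : ZMod q) : ℤ) with hT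
  have hTsum : ∑ j ∈ Finset.range q, T (j : ℤ) = n * p := by
    simp only [hT]
    rw [Finset.sum_comm]
    have : ∀ k ∈ Finset.range n, ∑ j ∈ Finset.range q, (w ((((j : ℤ) + k : ℤ)) : ZMod q) : ℤ) = p := by
      intro k _
      have := period_sum hq w hw.1 hw.2.1 (k : ℤ)
      rw [← this]
      exact Finset.sum_congr rfl fun j _ => by rw [add_comm]
    rw [Finset.sum_congr rfl this]
    simp [mul_comm]
  have hTbal : ∀ a b : ℤ, |T a - T b| ≤ 1 := fun a b => hw.2.2.2 n a b
  have hTper : T i = T (i % q) := by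
    simp only [hT]
    refine Finset.sum_congr rfl fun k _ => ?_
    congr 1
    push_cast
    ring
  set j0 : ℕ := (i % q).toNat with hj0def
  have hj0 : (j0 : ℤ) = i % q := Int.toNat_of_nonneg (Int.emod_nonneg i hq'.ne')
  have hj0mem : j0 ∈ Finset.range q := by
    rw [Finset.mem_range]
    have := Int.emod_lt_of_pos i hq'
    omega
  have hTi : T i = T (j0 : ℤ) := by rw [hTper, hj0]
  have key : (q : ℤ) * T i - p * n = ∑ j ∈ Finset.range q, (T i - T (j : ℤ)) := by
    rw [Finset.sum_sub_distrib, hTsum, Finset.sum_const, Finset.card_range, nsmul_eq_mul]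
    ring
  rw [key]
  calc |∑ j ∈ Finset.range q, (T i - T (j : ℤ))|
      ≤ ∑ j ∈ Finset.range q, |T i - T (j : ℤ)| := Finset.abs_sum_le_sum_abs _ _
    _ ≤ ∑ j ∈ Finset.range q, (if j = j0 then (0 : ℤ) else 1) := by
        refine Finset.sum_le_sum fun j _ => ?_
        by_cases h : j = j0
        · simp [h, hTi]
        · simp only [h, if_false]
          exact hTbal _ _
    _ = q - 1 := by
        have : ∑ j ∈ Finset.range q, (if j = j0 then (0 : ℤ) else 1)
            = ∑ j ∈ Finset.range q, ((1 : ℤ) - if j = j0 then 1 else 0) := by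
          refine Finset.sum_congr rfl fun j _ => ?_
          split_ifs <;> ring
        rw [this, Finset.sum_sub_distrib, Finset.sum_const, Finset.card_range,
          Finset.sum_ite_eq' (Finset.range q) j0 (fun _ => (1 : ℤ)), if_pos hj0mem]
        simp

/-- The structure theorem: any Sturmian word is given by a mechanical formula. -/
lemma sturmian_key (hp : 0 < p) (hpq : p < q) (w : ZMod q → ℕ)
    (hw : IsSturmianWord p q w) :
    ∃ M : ℤ, ∀ n : ℕ, (q : ℤ) * (w (n : ZMod q) : ℤ)
      = (M + p * n) % q + p - (M + p * n + p) % q := by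
  have hq : 0 < q := by omega
  have hq' : (0 : ℤ) < q := by exact_mod_cast hq
  set h : ℕ → ℤ := fun n => q * (∑ k ∈ Finset.range n, (w ((k : ℤ) : ZMod q) : ℤ)) - p * n
    with hh
  have hdiff : ∀ b m : ℕ, h (b + m) - h b
      = q * (∑ k ∈ Finset.range m, (w (((b : ℤ) + k : ℤ) : ZMod q) : ℤ)) - p * m := by
    intro b m
    simp only [hh]
    rw [Finset.sum_range_add]
    have : ∀ k ∈ Finset.range m, (w (((b + k : ℕ) : ℤ) : ZMod q) : ℤ)
        = (w (((b : ℤ) + k : ℤ) : ZMod q) : ℤ) := by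
      intro k _
      congr 2
      try push_cast
      try ring
    rw [Finset.sum_congr rfl this]
    push_cast
    ring
  have hbound : ∀ a b : ℕ, |h a - h b| ≤ q - 1 := by
    have half : ∀ a b : ℕ, b ≤ a → |h a - h b| ≤ q - 1 := by
      intro a b hba
      obtain ⟨m, rfl⟩ := Nat.exists_eq_add_of_le hba
      rw [hdiff b m]
      exact window_bound hq w hw m (b : ℤ)
    intro a b
    rcases le_total b a with hba | hab
    · exact half a b hba
    · rw [abs_sub_comm]; exact half b a hab
  have hper : ∀ n : ℕ, h (n + q) = h n := by
    intro n
    have hd := hdiff n q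
    rw [period_sum hq w hw.1 hw.2.1 (n : ℤ)] at hd
    have : h (n + q) - h n = 0 := by rw [hd]; ring
    linarith
  have hmod : ∀ n : ℕ, h n = h (n % q) := by
    intro n
    conv_lhs => rw [← Nat.mod_add_div n q]
    generalize n / q = c
    induction c with
    | zero => simp
    | succ c ih =>
        have : n % q + q * (c + 1) = (n % q + q * c) + q := by ring
        rw [this, hper, ih]
  have hne : ((Finset.range q).image h).Nonempty :=
    (Finset.nonempty_range_iff.mpr hq.ne').image h
  set M : ℤ := ((Finset.range q).image h).max' hne with hM
  obtain ⟨n0, hn0mem, hn0⟩ := Finset.mem_image.mp (((Finset.range q).image h).max'_mem hne)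
  have hub : ∀ n : ℕ, h n ≤ M := by
    intro n
    rw [hmod n]
    exact Finset.le_max' _ _ (Finset.mem_image_of_mem h
      (Finset.mem_range.mpr (Nat.mod_lt n hq)))
  have hlb : ∀ n : ℕ, M - (q - 1) ≤ h n := by
    intro n
    have := hbound n n0
    rw [abs_le] at this
    linarith [this.1, hn0]
  have hdvd : ∀ n : ℕ, (q : ℤ) ∣ h n + p * n := by
    intro n
    exact ⟨∑ k ∈ Finset.range n, (w ((k : ℤ) : ZMod q) : ℤ), by simp only [hh]; ring⟩
  have hform : ∀ n : ℕ, h n = M - (M + p * n) % q := by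
    intro n
    have hr0 : 0 ≤ (M + p * n) % q := Int.emod_nonneg _ hq'.ne'
    have hr1 : (M + p * n) % q < q := Int.emod_lt_of_pos _ hq'
    have hd : (q : ℤ) ∣ (M - (M + p * n) % q) - h n := by
      have d1 : (q : ℤ) ∣ (M + p * n) - (M + p * n) % q :=
        ⟨(M + p * n) / q, by rw [Int.emod_def]; ring⟩
      have d2 := hdvd n
      have : (M - (M + p * n) % q) - h n
          = ((M + p * n) - (M + p * n) % q) - (h n + p * n) := by ring
      rw [this]
      exact dvd_sub d1 d2
    have habs : |(M - (M + p * n) % q) - h n| < q := by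
      rw [abs_lt]
      constructor
      · linarith [hub n]
      · linarith [hlb n]
    have := Int.eq_zero_of_abs_lt_dvd hd habs
    linarith
  refine ⟨M, fun n => ?_⟩
  have e1 := hform (n + 1)
  have e2 := hform n
  have e3 : h (n + 1) - h n = q * (w ((n : ℕ) : ZMod q) : ℤ) - p := by
    simp only [hh, Finset.sum_range_succ]
    have : (w (((n : ℕ) : ℤ) : ZMod q) : ℤ) = (w ((n : ℕ) : ZMod q) : ℤ) := by
      congr 2
      try push_cast
      try ring
    rw [this]
    push_cast
    ring
  have e4 : (M + (p : ℤ) * ((n : ℕ) + 1 : ℕ)) % q = (M + p * n + p) % q := by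
    congr 1
    push_cast
    ring
  rw [e1, e2, e4] at e3
  linarith

lemma sturmian_unique (hp : 0 < p) (hpq : p < q) (hcop : Nat.Coprime p q)
    (w w' : ZMod q → ℕ) (hw : IsSturmianWord p q w) (hw' : IsSturmianWord p q w') :
    ∃ t : ZMod q, ∀ i : ZMod q, w' i = w (i + t) := by
  have hq : 0 < q := by omega
  haveI : NeZero q := ⟨hq.ne'⟩
  have hq' : (0 : ℤ) < q := by exact_mod_cast hq
  obtain ⟨M, key⟩ := sturmian_key hp hpq w hw
  obtain ⟨M', key'⟩ := sturmian_key hp hpq w' hw'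
  set t : ZMod q := ((M' - M : ℤ) : ZMod q) * ((p : ZMod q))⁻¹ with ht
  have hpt : (p : ZMod q) * t = ((M' - M : ℤ) : ZMod q) := by
    rw [ht, mul_comm ((M' - M : ℤ) : ZMod q), ← mul_assoc,
      ZMod.coe_mul_inv_eq_one p hcop, one_mul]
  refine ⟨t, fun i => ?_⟩
  set n : ℕ := i.val with hn
  set t0 : ℕ := t.val with ht0
  have hni : ((n : ℕ) : ZMod q) = i := by simp [hn, ZMod.natCast_val, ZMod.cast_id]
  have hti : ((t0 : ℕ) : ZMod q) = t := by simp [ht0, ZMod.natCast_val, ZMod.cast_id]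
  have hcong : ∀ c : ℤ, (M + p * ((n : ℤ) + t0) + c) % q = (M' + p * n + c) % q := by
    intro c
    rw [← ZMod.intCast_eq_intCast_iff']
    push_cast
    rw [hti]
    have hpt' : (p : ZMod q) * t = ((M' : ℤ) : ZMod q) - ((M : ℤ) : ZMod q) := by
      rw [hpt]; push_cast; ring
    linear_combination hpt'
  have k1 := key' n
  have k2 := key (n + t0)
  have e5 : (((n + t0 : ℕ) : ℤ)) = (n : ℤ) + t0 := by push_cast; ring
  rw [e5] at k2
  have hcast : (w' ((n : ℕ) : ZMod q) : ℤ) = (w (((n + t0 : ℕ)) : ZMod q) : ℤ) := by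
    have h0 := hcong 0
    have hp' := hcong p
    apply mul_left_cancel₀ hq'.ne'
    rw [k1, k2]
    simp only [add_zero] at h0
    rw [h0, hp']
  have : w' ((n : ℕ) : ZMod q) = w (((n + t0 : ℕ)) : ZMod q) := by exact_mod_cast hcast
  rw [hni] at this
  rw [this]
  congr 1
  push_cast
  rw [hni, hti]

/-- For coprime `0 < p < q` there is a function `w : ℤ/qℤ → {0,1}` taking the
value `1` at exactly `p` residues whose `q`-periodic bi-infinite extension is
Sturmian, and `w` is unique up to cyclic permutation (precomposition with a
translation of `ℤ/qℤ`).  This is the finite Sturmian word `W_{p/q}`. -/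
theorem sturmian_word_exists_unique (p q : ℕ) (hp : 0 < p) (hpq : p < q)
    (hcop : Nat.Coprime p q) :
    (∃ w : ZMod q → ℕ, IsSturmianWord p q w) ∧
    (∀ w w' : ZMod q → ℕ, IsSturmianWord p q w → IsSturmianWord p q w' →
      ∃ t : ZMod q, ∀ i : ZMod q, w' i = w (i + t)) := by
  constructor
  · exact ⟨mechWord p q, mechWord_sturmian p q hp hpq⟩
  · exact fun w w2 hw hw2 => sturmian_unique hp hpq hcop w w2 hw hw2
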